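/- Let X be a complex Banach space, D ⊆ X a linear subspace, and T : D → X a closed linear operator (its graph is closed in X × X). Then for every x ∈ D(T^∞), one has sup{|z| : z ∈ σ_T(x)} ≤ limsup_{n→∞} ‖T^n x‖^{1/n}, where the inequality holds in the extended nonnegative reals [0,∞]. -/

import Mathlib

open Filter
open scoped ENNReal NNReal Topology

noncomputable section

variable {X : Type*} [NormedAddCommGroup X] [NormedSpace ℂ X]

/-- `z₀` belongs to the local resolvent set of the (possibly unbounded, partially defined)
operator `T` at `x` if there is an open neighbourhood `U` of `z₀` and an analytic function
`φ : U → X` with values in the domain of `T` such that `(T - z) φ z = x` on `U`. -/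
def LocalResolventSet (T : X →ₗ.[ℂ] X) (x : X) : Set ℂ :=
  {z₀ | ∃ U : Set ℂ, IsOpen U ∧ z₀ ∈ U ∧ ∃ φ : ℂ → X,
    AnalyticOnNhd ℂ φ U ∧ ∀ z ∈ U, ∃ hz : φ z ∈ T.domain, T ⟨φ z, hz⟩ - z • φ z = x}

/-- The local spectrum of `T` at `x` is the complement of the local resolvent set. -/
def LocalSpectrum (T : X →ₗ.[ℂ] X) (x : X) : Set ℂ :=
  (LocalResolventSet T x)ᶜ

/-- `y` is the orbit of `x` under `T` : `y n = T^n x`; its existence witnesses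
`x ∈ D(T^∞)`. -/
def IsIterSeq (T : X →ₗ.[ℂ] X) (x : X) (y : ℕ → X) : Prop :=
  y 0 = x ∧ ∀ n : ℕ, ∃ hn : y n ∈ T.domain, T ⟨y n, hn⟩ = y (n + 1)

/-- If `T` is a closed operator on a complex Banach space `X` and `x ∈ D(T^∞)`, then
`sup {|z| : z ∈ σ_T(x)} ≤ limsup ‖T^n x‖^{1/n}` in `[0,∞]`. -/
theorem stmt0 [CompleteSpace X] (T : X →ₗ.[ℂ] X)
    (hclosed : IsClosed (T.graph : Set (X × X)))
    (x : X) (y : ℕ → X) (hy : IsIterSeq T x y) :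
    (⨆ z ∈ LocalSpectrum T x, (‖z‖₊ : ℝ≥0∞)) ≤
      Filter.limsup (fun n : ℕ => (‖y n‖₊ : ℝ≥0∞) ^ (1 / (n : ℝ))) atTop := by
  obtain ⟨hy0, hyT⟩ := hy
  refine iSup₂_le fun z₀ hz₀ => ?_
  by_contra hlt
  push_neg at hlt
  refine hz₀ ?_
  obtain ⟨a', hLa, haz⟩ := exists_between hlt
  obtain ⟨b', hab, hbz⟩ := exists_between haz
  lift a' to NNReal using haz.ne_top with a
  lift b' to NNReal using hbz.ne_top with b
  have ha0 : 0 < a := ENNReal.coe_pos.mp ((zero_le).trans_lt hLa)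
  have habN : a < b := ENNReal.coe_lt_coe.mp hab
  have hb0 : 0 < b := ha0.trans habN
  have hb0R : (0 : ℝ) < b := hb0
  have habR : (a : ℝ) < b := habN
  have hbzR : (b : ℝ) < ‖z₀‖ := by
    have := ENNReal.coe_lt_coe.mp hbz
    exact_mod_cast this
  -- eventual bound ‖y n‖ ≤ a ^ n
  have hEv : ∀ᶠ n in atTop, ‖y n‖ ≤ (a : ℝ) ^ n := by
    filter_upwards [eventually_lt_of_limsup_lt hLa, eventually_ge_atTop 1] with n hn hn1
    have hn0 : (n : ℝ) ≠ 0 := Nat.cast_ne_zero.mpr (by omega)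
    have key : (‖y n‖₊ : ℝ≥0∞) ≤ (a : ℝ≥0∞) ^ (n : ℝ) := by
      calc (‖y n‖₊ : ℝ≥0∞) = ((‖y n‖₊ : ℝ≥0∞) ^ (1 / (n : ℝ))) ^ (n : ℝ) := by
            rw [← ENNReal.rpow_mul, one_div, inv_mul_cancel₀ hn0, ENNReal.rpow_one]
        _ ≤ (a : ℝ≥0∞) ^ (n : ℝ) := ENNReal.rpow_le_rpow hn.le (Nat.cast_nonneg n)
    rw [ENNReal.rpow_natCast, ← ENNReal.coe_pow, ENNReal.coe_le_coe] at key
    calc ‖y n‖ = ((‖y n‖₊ : ℝ)) := rfl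
      _ ≤ ((a ^ n : ℝ≥0) : ℝ) := NNReal.coe_le_coe.mpr key
      _ = (a : ℝ) ^ n := by push_cast; ring
  obtain ⟨N, hN⟩ := Filter.eventually_atTop.mp hEv
  -- the power series
  set c : ℕ → X := fun n => match n with | 0 => (0 : X) | (m + 1) => -(y m) with hc
  set p : FormalMultilinearSeries ℂ ℂ X :=
    fun n => ContinuousMultilinearMap.mkPiRing ℂ (Fin n) (c n) with hp
  have hrad : ((b⁻¹ : ℝ≥0) : ℝ≥0∞) ≤ p.radius := by
    apply FormalMultilinearSeries.le_radius_of_eventually_le p ((b : ℝ)⁻¹)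
    filter_upwards [eventually_ge_atTop (N + 1)] with n hn
    obtain ⟨m, rfl⟩ : ∃ m, n = m + 1 := ⟨n - 1, by omega⟩
    have hm : N ≤ m := by omega
    have hpm : ‖p (m + 1)‖ = ‖y m‖ := by
      rw [hp]
      rw [ContinuousMultilinearMap.norm_mkPiRing]
      simp [hc]
    rw [hpm]
    have h1 : ‖y m‖ ≤ (a : ℝ) ^ m := hN m hm
    have h2 : ((b⁻¹ : ℝ≥0) : ℝ) = (b : ℝ)⁻¹ := by push_cast; ring
    rw [h2]
    calc ‖y m‖ * ((b : ℝ)⁻¹) ^ (m + 1) ≤ (a : ℝ) ^ m * ((b : ℝ)⁻¹) ^ (m + 1) := by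
          gcongr
      _ = ((a : ℝ) / b) ^ m * (b : ℝ)⁻¹ := by
          ring
      _ ≤ 1 * (b : ℝ)⁻¹ := by
          gcongr
          exact pow_le_one₀ (by positivity) ((div_le_one hb0R).mpr habR.le)
      _ = (b : ℝ)⁻¹ := one_mul _
  have hradpos : 0 < p.radius :=
    lt_of_lt_of_le (by simpa using (inv_pos.mpr hb0)) hrad
  have hps := p.hasFPowerSeriesOnBall hradpos
  have hg : AnalyticOnNhd ℂ p.sum (Metric.eball 0 p.radius) := hps.analyticOnNhd
  set U : Set ℂ := {z | (b : ℝ) < ‖z‖} with hU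
  have hUopen : IsOpen U := isOpen_lt continuous_const continuous_norm
  have hz₀U : z₀ ∈ U := hbzR
  have hzfacts : ∀ z ∈ U, z ≠ 0 ∧ z⁻¹ ∈ Metric.eball (0 : ℂ) p.radius := by
    intro z hz
    have hzU : (b : ℝ) < ‖z‖ := hz
    have hz0 : z ≠ 0 := by
      intro h
      rw [h, norm_zero] at hzU
      linarith
    refine ⟨hz0, ?_⟩
    rw [EMetric.mem_ball, edist_zero_right, enorm_eq_nnnorm]
    refine lt_of_lt_of_le ?_ hrad
    rw [ENNReal.coe_lt_coe, nnnorm_inv]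
    have : b < ‖z‖₊ := by
      rw [← NNReal.coe_lt_coe]
      exact hzU
    exact inv_strictAnti₀ hb0 this
  refine ⟨U, hUopen, hz₀U, fun z => p.sum z⁻¹, ?_, ?_⟩
  · intro z hz
    obtain ⟨hz0, hmem⟩ := hzfacts z hz
    exact (hg _ hmem).comp (analyticAt_inv hz0)
  · intro z hz
    obtain ⟨hz0, -⟩ := hzfacts z hz
    have hzU : (b : ℝ) < ‖z‖ := hz
    have hzinv : ‖z⁻¹‖ ≤ (b : ℝ)⁻¹ := by
      rw [norm_inv]
      exact inv_anti₀ hb0R hzU.le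
    set f : ℕ → X := fun n => (z⁻¹) ^ (n + 1) • y n with hf_def
    set f' : ℕ → X := fun n => (z⁻¹) ^ (n + 1) • y (n + 1) with hf'_def
    have hratio : (a : ℝ) / b < 1 := (div_lt_one hb0R).mpr habR
    have hratio0 : (0 : ℝ) ≤ (a : ℝ) / b := by positivity
    have hgeo := summable_geometric_of_lt_one hratio0 hratio
    have hbound : ∀ n ≥ N, ‖z⁻¹‖ ^ (n + 1) * ‖y n‖ ≤ (b : ℝ)⁻¹ * ((a : ℝ) / b) ^ n := by
      intro n hn
      calc ‖z⁻¹‖ ^ (n + 1) * ‖y n‖ ≤ ((b : ℝ)⁻¹) ^ (n + 1) * (a : ℝ) ^ n :=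
            mul_le_mul (pow_le_pow_left₀ (norm_nonneg _) hzinv _) (hN n hn)
              (norm_nonneg _) (by positivity)
          _ = (b : ℝ)⁻¹ * ((a : ℝ) / b) ^ n := by
            ring
    have hf : Summable f := by
      apply Summable.of_norm_bounded_eventually_nat (hgeo.mul_left ((b : ℝ)⁻¹))
      filter_upwards [eventually_ge_atTop N] with n hn
      rw [hf_def]
      simp only [norm_smul, norm_pow]
      exact hbound n hn
    have hf' : Summable f' := by
      apply Summable.of_norm_bounded_eventually_nat (hgeo.mul_left ((a : ℝ) / b))
      filter_upwards [eventually_ge_atTop N] with n hn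
      rw [hf'_def]
      simp only [norm_smul, norm_pow]
      calc ‖z⁻¹‖ ^ (n + 1) * ‖y (n + 1)‖ ≤ ((b : ℝ)⁻¹) ^ (n + 1) * (a : ℝ) ^ (n + 1) :=
            mul_le_mul (pow_le_pow_left₀ (norm_nonneg _) hzinv _) (hN (n + 1) (by omega))
              (norm_nonneg _) (by positivity)
        _ = (a : ℝ) / b * ((a : ℝ) / b) ^ n := by
            ring
    have hmemy : ∀ n, y n ∈ T.domain := fun n => (hyT n).choose
    have hgraph : ∀ n : ℕ, ((f n, f' n) : X × X) ∈ T.graph := by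
      intro n
      have h0 : ((y n, y (n + 1)) : X × X) ∈ T.graph := by
        rw [LinearPMap.mem_graph_iff]
        exact ⟨⟨y n, hmemy n⟩, rfl, (hyT n).choose_spec⟩
      have h1 := T.graph.smul_mem ((z⁻¹) ^ (n + 1)) h0
      simpa [Prod.smul_mk, hf_def, hf'_def] using h1
    have hgraphS : ∀ M : ℕ,
        ((∑ n ∈ Finset.range M, f n, ∑ n ∈ Finset.range M, f' n) : X × X) ∈ T.graph := by
      intro M
      have h1 := T.graph.sum_mem (t := Finset.range M) (fun n _ => hgraph n)
      have h2 : (∑ n ∈ Finset.range M, ((f n, f' n) : X × X)) =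
          (∑ n ∈ Finset.range M, f n, ∑ n ∈ Finset.range M, f' n) := by
        exact Prod.ext (by simp [Prod.fst_sum]) (by simp [Prod.snd_sum])
      rwa [h2] at h1
    set F := ∑' n, f n with hF
    set F' := ∑' n, f' n with hF'
    have htend : Tendsto
        (fun M => ((∑ n ∈ Finset.range M, f n, ∑ n ∈ Finset.range M, f' n) : X × X))
        atTop (𝓝 (F, F')) :=
      (hf.hasSum.tendsto_sum_nat).prodMk_nhds (hf'.hasSum.tendsto_sum_nat)
    have hFmem : ((F, F') : X × X) ∈ T.graph :=
      hclosed.mem_of_tendsto htend (Filter.Eventually.of_forall hgraphS)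
    rw [LinearPMap.mem_graph_iff] at hFmem
    obtain ⟨v, hv1, hv2⟩ := hFmem
    have hv1' : (v : X) = F := hv1
    have hv2' : T v = F' := hv2
    -- identify the power series sum
    have hφz : p.sum z⁻¹ = -F := by
      have hsum : p.sum z⁻¹ = ∑' n, (z⁻¹) ^ n • c n := by
        rw [FormalMultilinearSeries.sum]
        refine tsum_congr fun n => ?_
        rw [hp]
        rw [ContinuousMultilinearMap.mkPiRing_apply]
        simp
      have hsucc : ∀ n : ℕ, (z⁻¹) ^ (n + 1) • c (n + 1) = -(f n) := by
        intro n
        simp [hc, hf_def]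
      have hsummable : Summable (fun n => (z⁻¹) ^ n • c n) := by
        rw [← summable_nat_add_iff 1]
        simp only [hsucc]
        exact hf.neg
      rw [hsum, Summable.tsum_eq_zero_add hsummable]
      rw [show ((z⁻¹) ^ 0 • c 0 : X) = 0 by simp [hc], zero_add, tsum_congr hsucc, tsum_neg]
    have hFdom : F ∈ T.domain := hv1' ▸ v.2
    have hdom : p.sum z⁻¹ ∈ T.domain := by
      rw [hφz]
      exact T.domain.neg_mem hFdom
    refine ⟨hdom, ?_⟩
    have hveq : (⟨p.sum z⁻¹, hdom⟩ : T.domain) = -v := by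
      refine Subtype.ext ?_
      show p.sum z⁻¹ = -(v : X)
      rw [hφz, hv1']
    have hzF : z • F = x + F' := by
      have h1 : z • F = ∑' n, z • f n := (Summable.tsum_const_smul z hf).symm
      have h2 : ∀ n : ℕ, z • f n = (z⁻¹) ^ n • y n := by
        intro n
        rw [hf_def]
        rw [smul_smul]
        congr 1
        rw [pow_succ, ← mul_assoc, mul_comm z, mul_assoc, mul_inv_cancel₀ hz0, mul_one]
      have hk : Summable (fun n : ℕ => (z⁻¹) ^ n • y n) := by
        rw [← summable_nat_add_iff 1]
        exact hf'
      rw [h1, tsum_congr h2, Summable.tsum_eq_zero_add hk]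
      rw [pow_zero, one_smul, hy0]
    show T ⟨p.sum z⁻¹, hdom⟩ - z • p.sum z⁻¹ = x
    rw [hveq]
    have hmapneg : T (-v) = -(T v) := map_neg T.toFun v
    rw [hmapneg, hv2', hφz, smul_neg, hzF, sub_neg_eq_add]
    abel
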